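/- Let $T$ be a tree rooted at a single initially burning vertex $u$ with neighbours $v_1,\dots,v_{\deg(u)}$, and let $S_{v_i}$ denote the number of vertices of the component of $T - u$ containing $v_i$. In the path-restricted firefighter game with $b$ firefighters (any distance bound $d \geq 1$), the maximum number of vertices the firefighters can save equals the sum of the $\min(b, \deg(u))$ largest values among $S_{v_1},\dots,S_{v_{\deg(u)}}$. -/
import Mathlib


open SimpleGraph Finset
open scoped Classical

namespace FF

variable {V : Type*} [Fintype V] [DecidableEq V]

/-- One step of fire spread: the fire spreads to every undefended neighbour of a burnt vertex. -/
noncomputable def spread (G : SimpleGraph V) (D B : Finset V) : Finset V :=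
  B ∪ Finset.univ.filter (fun v => v ∉ D ∧ ∃ u ∈ B, G.Adj u v)

/-- Cumulative defended set of a classic strategy. -/
noncomputable def cumDef (σ : ℕ → Finset V) (t : ℕ) : Finset V :=
  (Finset.range (t + 1)).biUnion σ

/-- Burnt set at time `t` in the classic game. -/
noncomputable def burnt (G : SimpleGraph V) (F : Finset V) (σ : ℕ → Finset V) : ℕ → Finset V
  | 0 => F
  | t + 1 => spread G (cumDef σ t) (burnt G F σ t)

/-- A classic strategy is valid for `b` firefighters. -/
def ValidClassic (G : SimpleGraph V) (F : Finset V) (b : ℕ) (σ : ℕ → Finset V) : Prop :=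
  ∀ t, (σ t).card ≤ b ∧ ∀ v ∈ σ t, v ∉ burnt G F σ t

/-- Final burnt set (the process stabilizes after `|V|` steps). -/
noncomputable def finalBurnt (G : SimpleGraph V) (F : Finset V) (σ : ℕ → Finset V) : Finset V :=
  burnt G F σ (Fintype.card V)

/-- Maximum number of vertices saved in the classic game. -/
noncomputable def MVS (G : SimpleGraph V) (F : Finset V) (b : ℕ) : ℕ :=
  sSup {k | ∃ σ : ℕ → Finset V, ValidClassic G F b σ ∧
    k = Fintype.card V - (finalBurnt G F σ).card}

/-- Defended set induced by firefighter positions up to time `t`. -/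
noncomputable def posDef {b : ℕ} (p : ℕ → Fin b → V) (t : ℕ) : Finset V :=
  (Finset.range (t + 1)).biUnion (fun τ => Finset.univ.image (p τ))

/-- Burnt set at time `t` in the position-based games. -/
noncomputable def pburnt (G : SimpleGraph V) (F : Finset V) {b : ℕ}
    (p : ℕ → Fin b → V) : ℕ → Finset V
  | 0 => F
  | t + 1 => spread G (posDef p t) (pburnt G F p t)

/-- Validity for the distance-restricted game: firefighters never occupy a burnt
vertex and move graph distance at most `d` each turn. -/
def ValidDR (G : SimpleGraph V) (F : Finset V) (d : ℕ) {b : ℕ} (p : ℕ → Fin b → V) : Prop :=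
  (∀ t i, p t i ∉ pburnt G F p t) ∧ ∀ t i, G.dist (p t i) (p (t + 1) i) ≤ d

/-- Distance-restricted maximum vertices saved. -/
noncomputable def DRMVS (G : SimpleGraph V) (F : Finset V) (b d : ℕ) : ℕ :=
  sSup {k | ∃ p : ℕ → Fin b → V, ValidDR G F d p ∧
    k = Fintype.card V - (pburnt G F p (Fintype.card V)).card}

/-- Validity for the path-restricted game with unlimited distance: firefighters
move along walks of unburnt vertices. -/
def ValidPR (G : SimpleGraph V) (F : Finset V) {b : ℕ} (p : ℕ → Fin b → V) : Prop :=
  (∀ t i, p t i ∉ pburnt G F p t) ∧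
    ∀ t i, ∃ w : G.Walk (p t i) (p (t + 1) i),
      ∀ v ∈ w.support, v ∉ pburnt G F p (t + 1)

/-- Path-restricted (unlimited distance) maximum vertices saved. -/
noncomputable def PRMVS (G : SimpleGraph V) (F : Finset V) (b : ℕ) : ℕ :=
  sSup {k | ∃ p : ℕ → Fin b → V, ValidPR G F p ∧
    k = Fintype.card V - (pburnt G F p (Fintype.card V)).card}

/-- Validity for the distance- and path-restricted game. -/
def ValidDPR (G : SimpleGraph V) (F : Finset V) (d : ℕ) {b : ℕ} (p : ℕ → Fin b → V) : Prop :=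
  (∀ t i, p t i ∉ pburnt G F p t) ∧
    ∀ t i, ∃ w : G.Walk (p t i) (p (t + 1) i), w.length ≤ d ∧
      ∀ v ∈ w.support, v ∉ pburnt G F p (t + 1)

/-- Distance- and path-restricted maximum vertices saved. -/
noncomputable def DPRMVS (G : SimpleGraph V) (F : Finset V) (b d : ℕ) : ℕ :=
  sSup {k | ∃ p : ℕ → Fin b → V, ValidDPR G F d p ∧
    k = Fintype.card V - (pburnt G F p (Fintype.card V)).card}

/-- Burnt count in the single-defence game: the firefighter defends a single
vertex `w ≠ s` and the fire then burns everything reachable from `s` avoiding `w`. -/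
noncomputable def sdBurnt (G : SimpleGraph V) (s : V) : ℕ :=
  sInf {k | ∃ w, w ≠ s ∧
    k = (Finset.univ.filter (fun x => ∃ q : G.Walk s x, w ∉ q.support)).card}

end FF

open FF

/-- The number of vertices of the component of `T - u` containing `v`:
the vertices reachable from `v` by a walk avoiding `u`. -/
noncomputable def compSize {V : Type*} [Fintype V] [DecidableEq V]
    (T : SimpleGraph V) (u v : V) : ℕ :=
  (Finset.univ.filter (fun w => ∃ q : T.Walk v w, u ∉ q.support)).card


section Aux

open FF

variable {V : Type*} [Fintype V] [DecidableEq V]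

/-- Reachability avoiding `u`. -/
def RU (T : SimpleGraph V) (u x y : V) : Prop := ∃ q : T.Walk x y, u ∉ q.support

lemma RU.ne_left {T : SimpleGraph V} {u x y : V} (h : RU T u x y) : x ≠ u := by
  obtain ⟨q, hq⟩ := h; rintro rfl; exact hq q.start_mem_support

lemma RU.ne_right {T : SimpleGraph V} {u x y : V} (h : RU T u x y) : y ≠ u := by
  obtain ⟨q, hq⟩ := h; rintro rfl; exact hq q.end_mem_support

lemma RU.refl {T : SimpleGraph V} {u x : V} (h : x ≠ u) : RU T u x x :=
  ⟨SimpleGraph.Walk.nil, by simp [h.symm]⟩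

lemma RU.symm {T : SimpleGraph V} {u x y : V} (h : RU T u x y) : RU T u y x := by
  obtain ⟨q, hq⟩ := h
  exact ⟨q.reverse, by simpa [SimpleGraph.Walk.support_reverse] using hq⟩

lemma RU.trans {T : SimpleGraph V} {u x y z : V} (h : RU T u x y) (h' : RU T u y z) :
    RU T u x z := by
  obtain ⟨q, hq⟩ := h
  obtain ⟨r, hr⟩ := h'
  refine ⟨q.append r, ?_⟩
  rw [SimpleGraph.Walk.support_append]
  intro hu
  rcases List.mem_append.1 hu with h1 | h1
  · exact hq h1
  · exact hr (List.mem_of_mem_tail h1)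

lemma RU.adj {T : SimpleGraph V} {u x y : V} (h : T.Adj x y) (hx : x ≠ u) (hy : y ≠ u) :
    RU T u x y :=
  ⟨SimpleGraph.Walk.cons h SimpleGraph.Walk.nil, by simp [hx.symm, hy.symm]⟩

/-- Component of `T - u` as a finset. -/
noncomputable def CS (T : SimpleGraph V) (u v : V) : Finset V :=
  Finset.univ.filter (fun w => RU T u v w)

lemma mem_CS {T : SimpleGraph V} {u v w : V} : w ∈ CS T u v ↔ RU T u v w := by
  simp [CS]

lemma CS_card (T : SimpleGraph V) (u v : V) : (CS T u v).card = compSize T u v := rfl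

/-- In a tree, distinct neighbours of `u` are in distinct components of `T - u`. -/
lemma neighbor_eq_of_RU {T : SimpleGraph V} (hT : T.IsTree) {u v w : V}
    (hv : T.Adj u v) (hw : T.Adj u w) (h : RU T u v w) : v = w := by
  by_contra hne
  obtain ⟨q, hq⟩ := h
  have hP2 : (SimpleGraph.Walk.cons hv.symm (SimpleGraph.Walk.cons hw SimpleGraph.Walk.nil) :
      T.Walk v w).IsPath := by
    simp [SimpleGraph.Walk.isPath_def, hv.ne', hw.ne, hne]
  have heq := hT.IsAcyclic.path_unique q.toPath ⟨_, hP2⟩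
  have hu : u ∈ (q.toPath : T.Walk v w).support := by
    rw [heq]; simp
  exact hq (q.support_toPath_subset hu)

lemma exists_nbr_aux {T : SimpleGraph V} {u x : V} (q : T.Walk u x) (hq : q.IsPath)
    (hx : x ≠ u) : ∃ v, T.Adj u v ∧ RU T u v x := by
  cases q with
  | nil => exact absurd rfl hx
  | @cons _ v _ h rest =>
    refine ⟨v, h, rest, ?_⟩
    have hnd := hq.support_nodup
    rw [SimpleGraph.Walk.support_cons, List.nodup_cons] at hnd
    exact hnd.1

/-- Every vertex other than `u` lies in the component of some neighbour of `u`. -/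
lemma exists_nbr {T : SimpleGraph V} (hT : T.IsTree) {u x : V} (hx : x ≠ u) :
    ∃ v, T.Adj u v ∧ RU T u v x := by
  obtain ⟨w⟩ := hT.isConnected u x
  exact exists_nbr_aux (w.toPath : T.Walk u x) w.toPath.2 hx

lemma u_mem_pburnt (T : SimpleGraph V) (u : V) {b : ℕ} (p : ℕ → Fin b → V) (t : ℕ) :
    u ∈ pburnt T {u} p t := by
  induction t with
  | zero => simp [pburnt]
  | succ t ih => exact Finset.mem_union_left _ ih

lemma pburnt_subset_succ (T : SimpleGraph V) (F : Finset V) {b : ℕ} (p : ℕ → Fin b → V)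
    (t : ℕ) : pburnt T F p t ⊆ pburnt T F p (t + 1) :=
  Finset.subset_union_left

lemma mem_posDef {b : ℕ} {p : ℕ → Fin b → V} {t : ℕ} {x : V} :
    x ∈ posDef p t ↔ ∃ τ ≤ t, ∃ i, p τ i = x := by
  simp [posDef, Nat.lt_succ_iff]

lemma mem_pburnt_succ {T : SimpleGraph V} {F : Finset V} {b : ℕ} {p : ℕ → Fin b → V}
    {t : ℕ} {x : V} (hx : x ∈ pburnt T F p (t + 1)) :
    x ∈ pburnt T F p t ∨ (x ∉ posDef p t ∧ ∃ y ∈ pburnt T F p t, T.Adj y x) := by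
  rcases Finset.mem_union.1 hx with h | h
  · exact Or.inl h
  · right
    simpa using (Finset.mem_filter.1 h).2

/-- Key lower-bound invariant: if each firefighter sits still on a vertex of `A`
(a set of neighbours of `u`), then no vertex in a component of a vertex of `A`
ever burns. -/
lemma lower_burn {T : SimpleGraph V} (hT : T.IsTree) (u : V) {b : ℕ}
    {A : Finset V} (hA : A ⊆ T.neighborFinset u) (f : Fin b → V)
    (hcov : A ⊆ Finset.univ.image f) :
    ∀ t x, x ∈ pburnt T {u} (fun _ => f) t → ∀ v ∈ A, ¬ RU T u v x := by
  intro t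
  induction t with
  | zero =>
    intro x hx v _ hru
    have : x = u := by simpa [pburnt] using hx
    exact hru.ne_right this
  | succ t ih =>
    intro x hx v hv hru
    rcases mem_pburnt_succ hx with h | ⟨hnd, y, hy, hadj⟩
    · exact ih x h v hv hru
    have hxu : x ≠ u := hru.ne_right
    by_cases hyu : y = u
    · -- x is a neighbour of u in the component of v, hence x = v ∈ A, defended
      have hxnb : T.Adj u x := hyu ▸ hadj
      have hvx : v = x := neighbor_eq_of_RU hT ((T.mem_neighborFinset u v).1 (hA hv)) hxnb hru
      subst hvx
      obtain ⟨i, -, hi⟩ := Finset.mem_image.1 (hcov hv)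
      exact hnd (mem_posDef.2 ⟨0, Nat.zero_le _, i, hi⟩)
    · -- y would be in the component of v, contradicting the IH
      exact ih y hy v hv (hru.trans (RU.adj hadj.symm hxu hyu))

lemma bddAbove_game (T : SimpleGraph V) (u : V) (b d : ℕ) :
    BddAbove {k | ∃ p : ℕ → Fin b → V, ValidDPR T {u} d p ∧
      k = Fintype.card V - (pburnt T {u} p (Fintype.card V)).card} := by
  refine ⟨Fintype.card V, ?_⟩
  rintro k ⟨p, -, rfl⟩
  exact Nat.sub_le _ _

lemma CS_disjoint {T : SimpleGraph V} (hT : T.IsTree) {u : V} {A : Finset V}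
    (hA : A ⊆ T.neighborFinset u) :
    ∀ v ∈ A, ∀ w ∈ A, v ≠ w → Disjoint (CS T u v) (CS T u w) := by
  intro v hv w hw hvw
  rw [Finset.disjoint_left]
  intro x hxv hxw
  exact hvw (neighbor_eq_of_RU hT ((T.mem_neighborFinset u v).1 (hA hv))
    ((T.mem_neighborFinset u w).1 (hA hw)) ((mem_CS.1 hxv).trans (mem_CS.1 hxw).symm))

end Aux


section Main

open FF

variable {V : Type*} [Fintype V] [DecidableEq V]

lemma lower_bound {T : SimpleGraph V} (hT : T.IsTree) (u : V) {b : ℕ} (d : ℕ)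
    {A : Finset V} (hA : A ⊆ T.neighborFinset u) (hAne : A.Nonempty) (hAb : A.card ≤ b) :
    ∃ p : ℕ → Fin b → V, ValidDPR T {u} d p ∧
      ∑ v ∈ A, compSize T u v ≤ Fintype.card V - (pburnt T {u} p (Fintype.card V)).card := by
  have hpos : 0 < A.card := hAne.card_pos
  set e := A.equivFin with he
  let f : Fin b → V := fun i =>
    if h : (i : ℕ) < A.card then (e.symm ⟨i, h⟩ : V) else (e.symm ⟨0, hpos⟩ : V)
  have hmemA : ∀ i, f i ∈ A := by
    intro i; dsimp only [f]; split <;> exact Subtype.coe_prop _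
  have hcov : A ⊆ Finset.univ.image f := by
    intro a ha
    refine Finset.mem_image.2 ⟨⟨(e ⟨a, ha⟩ : ℕ), lt_of_lt_of_le (e ⟨a, ha⟩).2 hAb⟩,
      Finset.mem_univ _, ?_⟩
    dsimp only [f]
    rw [dif_pos (e ⟨a, ha⟩).2]
    simp
  have hfu : ∀ i, T.Adj u (f i) := fun i => (T.mem_neighborFinset u _).1 (hA (hmemA i))
  have hnb : ∀ t x, x ∈ pburnt T {u} (fun _ => f) t → ∀ v ∈ A, ¬ RU T u v x :=
    lower_burn hT u hA f hcov
  have hsafe : ∀ t i, f i ∉ pburnt T {u} (fun _ => f) t := by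
    intro t i h
    exact hnb t _ h (f i) (hmemA i) (RU.refl (hfu i).ne')
  refine ⟨fun _ => f, ⟨fun t i => hsafe t i, ?_⟩, ?_⟩
  · intro t i
    refine ⟨SimpleGraph.Walk.nil, by simp, ?_⟩
    intro v hv
    simp only [SimpleGraph.Walk.support_nil, List.mem_singleton] at hv
    subst hv; exact hsafe _ i
  · have hdisj := CS_disjoint hT hA
    have hsub : A.biUnion (CS T u) ⊆
        Finset.univ \ pburnt T {u} (fun _ => f) (Fintype.card V) := by
      intro x hx
      obtain ⟨v, hv, hxv⟩ := Finset.mem_biUnion.1 hx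
      exact Finset.mem_sdiff.2 ⟨Finset.mem_univ _,
        fun hbx => hnb _ x hbx v hv (mem_CS.1 hxv)⟩
    calc ∑ v ∈ A, compSize T u v = (A.biUnion (CS T u)).card := by
          rw [Finset.card_biUnion hdisj]
          exact Finset.sum_congr rfl fun v _ => (CS_card T u v).symm
      _ ≤ (Finset.univ \ pburnt T {u} (fun _ => f) (Fintype.card V)).card :=
          Finset.card_le_card hsub
      _ = Fintype.card V - (pburnt T {u} (fun _ => f) (Fintype.card V)).card := by
          rw [Finset.card_sdiff_of_subset (Finset.subset_univ _), Finset.card_univ]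

lemma ff_component {T : SimpleGraph V} {u : V} {b d : ℕ} {p : ℕ → Fin b → V}
    (hp : ValidDPR T {u} d p) : ∀ t i, RU T u (p 0 i) (p t i) := by
  intro t i
  induction t with
  | zero =>
    have h0 : p 0 i ∉ pburnt T {u} p 0 := hp.1 0 i
    have : p 0 i ≠ u := by simpa [pburnt] using h0
    exact RU.refl this
  | succ t ih =>
    obtain ⟨w, -, hw⟩ := hp.2 t i
    exact ih.trans ⟨w, fun hu => hw u hu (u_mem_pburnt T u p _)⟩

lemma walk_step {T : SimpleGraph V} {u x : V} (r : T.Walk x u) (hx : x ≠ u) :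
    ∃ y, T.Adj x y ∧ T.dist u y + 1 ≤ r.length := by
  cases r with
  | nil => exact absurd rfl hx
  | @cons _ y _ h rest =>
    refine ⟨y, h, ?_⟩
    have hd : T.dist u y ≤ rest.length := by
      rw [SimpleGraph.dist_comm]; exact SimpleGraph.dist_le rest
    simpa [SimpleGraph.Walk.length_cons] using Nat.add_le_add_right hd 1

lemma upper_burn {T : SimpleGraph V} (hT : T.IsTree) {u : V} {b d : ℕ} {p : ℕ → Fin b → V}
    (hp : ValidDPR T {u} d p) :
    ∀ t x, x ≠ u → T.dist u x ≤ t → (∀ i, ¬ RU T u (p 0 i) x) → x ∈ pburnt T {u} p t := by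
  intro t
  induction t with
  | zero =>
    intro x hx hd _
    rcases SimpleGraph.dist_eq_zero_iff_eq_or_not_reachable.1 (Nat.le_zero.1 hd) with h | h
    · exact absurd h.symm hx
    · exact absurd (hT.isConnected u x) h
  | succ t ih =>
    intro x hx hd hbad
    by_cases hdt : T.dist u x ≤ t
    · exact pburnt_subset_succ _ _ _ _ (ih x hx hdt hbad)
    obtain ⟨w, hwl⟩ := (hT.isConnected u x).exists_walk_length_eq_dist
    obtain ⟨y, hadj, hylen⟩ := walk_step w.reverse hx
    have hylen' : T.dist u y ≤ t := by
      have : w.reverse.length = T.dist u x := by simpa using hwl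
      omega
    have hnd : x ∉ posDef p t := by
      intro hmem
      obtain ⟨τ, -, i, hi⟩ := mem_posDef.1 hmem
      exact hbad i (hi ▸ ff_component hp τ i)
    have hymem : y ∈ pburnt T {u} p t := by
      by_cases hyu : y = u
      · exact hyu ▸ u_mem_pburnt T u p t
      · refine ih y hyu hylen' ?_
        intro i hi
        exact hbad i (hi.trans (RU.adj hadj.symm hyu hx))
    exact Finset.mem_union_right _
      (Finset.mem_filter.2 ⟨Finset.mem_univ _, hnd, y, hymem, hadj.symm⟩)

lemma upper_bound {T : SimpleGraph V} (hT : T.IsTree) {u : V} {b d : ℕ}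
    {p : ℕ → Fin b → V} (hp : ValidDPR T {u} d p) :
    Fintype.card V - (pburnt T {u} p (Fintype.card V)).card ≤
      ((T.neighborFinset u).powersetCard (min b (T.degree u))).sup
        (fun A => ∑ v ∈ A, compSize T u v) := by
  have hne : ∀ i, p 0 i ≠ u := by
    intro i; have := hp.1 0 i; simpa [pburnt] using this
  choose vb hadj hru using fun i : Fin b => exists_nbr hT (hne i)
  set A' : Finset V := Finset.univ.image vb with hA'
  have hA'sub : A' ⊆ T.neighborFinset u := by
    intro v hv; obtain ⟨i, -, rfl⟩ := Finset.mem_image.1 hv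
    exact (T.mem_neighborFinset u _).2 (hadj i)
  have hA'card : A'.card ≤ min b (T.degree u) := by
    refine le_min ?_ (Finset.card_le_card hA'sub)
    calc A'.card ≤ (Finset.univ : Finset (Fin b)).card := Finset.card_image_le
      _ = b := by simp
  obtain ⟨A, hsub, hsubnb, hcard⟩ := Finset.exists_subsuperset_card_eq hA'sub hA'card
    (min_le_right _ _)
  have hsaved : Finset.univ \ pburnt T {u} p (Fintype.card V) ⊆ A.biUnion (CS T u) := by
    intro x hxm
    obtain ⟨-, hxnb⟩ := Finset.mem_sdiff.1 hxm
    have hxu : x ≠ u := fun h => hxnb (h ▸ u_mem_pburnt T u p _)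
    have hdist : T.dist u x ≤ Fintype.card V := by
      obtain ⟨w⟩ := hT.isConnected u x
      exact le_of_lt (lt_of_le_of_lt (SimpleGraph.dist_le (w.toPath : T.Walk u x))
        w.toPath.2.length_lt)
    have hex : ¬ ∀ i, ¬ RU T u (p 0 i) x :=
      fun hall => hxnb (upper_burn hT hp _ x hxu hdist hall)
    push_neg at hex
    obtain ⟨i, hi⟩ := hex
    exact Finset.mem_biUnion.2 ⟨vb i, hsub (Finset.mem_image.2 ⟨i, Finset.mem_univ _, rfl⟩),
      mem_CS.2 ((hru i).trans hi)⟩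
  calc Fintype.card V - (pburnt T {u} p (Fintype.card V)).card
      = (Finset.univ \ pburnt T {u} p (Fintype.card V)).card := by
        rw [Finset.card_sdiff_of_subset (Finset.subset_univ _), Finset.card_univ]
    _ ≤ (A.biUnion (CS T u)).card := Finset.card_le_card hsaved
    _ ≤ ∑ v ∈ A, compSize T u v := Finset.card_biUnion_le
    _ ≤ _ := Finset.le_sup (f := fun A => ∑ v ∈ A, compSize T u v)
        (Finset.mem_powersetCard.2 ⟨hsubnb, hcard⟩)

end Main

theorem stmt7 {V : Type*} [Fintype V] [DecidableEq V]
    (T : SimpleGraph V) (hT : T.IsTree) (u : V) (b d : ℕ) (hb : 1 ≤ b) (hd : 1 ≤ d) :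
    FF.DPRMVS T {u} b d =
      ((T.neighborFinset u).powersetCard (min b (T.degree u))).sup
        (fun A => ∑ v ∈ A, compSize T u v) := by
  rw [FF.DPRMVS]
  apply le_antisymm
  · apply csSup_le'
    rintro k ⟨p, hp, rfl⟩
    exact upper_bound hT hp
  · apply Finset.sup_le
    intro A hA
    rw [Finset.mem_powersetCard] at hA
    obtain ⟨hsub, hcard⟩ := hA
    rcases A.eq_empty_or_nonempty with rfl | hAne
    · exact Nat.zero_le _
    · obtain ⟨p, hvalid, hle⟩ := lower_bound hT u d hsub hAne (hcard ▸ min_le_left _ _)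
      exact le_trans hle (le_csSup (bddAbove_game T u b d) ⟨p, hvalid, rfl⟩)
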